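/- Let n ≥ 1, χ ∈ (0,1), η > 0, K > 0, let r ≥ 0 be an integer, and let C ∈ ℝ^{n×n} have positive entries. Let (α,β), (α̃,β̃) ∈ ℤⁿ×ℤⁿ and set (α',β') = (α+α̃, β+β̃). Let D, P be rounded-dual matrices for (α,β) and D', P' for (α',β'), with corresponding weights w and w'. Suppose D_{ij} ≤ (r+1)·K·C_{ij} and D'_{ij} ≤ (r+1)·K·C_{ij} for all i, j. Then for every i, j ∈ [n] and σ ∈ {−1,1}: w'_{i,j,σ} ≤ w_{i,j,σ}·exp(2·η·χ·(r+1)·K)·exp(η·σ·(α̃ᵢ − β̃ⱼ)/C_{ij}). -/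

import Mathlib

open Finset

/-- `(D, P)` is a rounded-dual pair for `(α, β)` with rounding parameter `χ`:
`D` has entries in `{0} ∪ {(1+χ)^h : h ∈ ℕ}` with `D_{ij} ≤ |αᵢ − βⱼ| ≤ (1+χ)·D_{ij}`,
and `P` is the sign matrix of `α_i − β_j` (with `sign 0 = 1`). -/
def IsRoundedDual {n : ℕ} (χ : ℝ) (α β : Fin n → ℤ)
    (D P : Fin n → Fin n → ℝ) : Prop :=
  (∀ i j, D i j = 0 ∨ ∃ h : ℕ, D i j = (1 + χ) ^ h) ∧
  (∀ i j, D i j ≤ |(α i : ℝ) - (β j : ℝ)| ∧ |(α i : ℝ) - (β j : ℝ)| ≤ (1 + χ) * D i j) ∧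
  (∀ i j, P i j = if 0 ≤ α i - β j then (1 : ℝ) else -1)

/-- The MWU weight `w_{i,j,σ} = exp(η·σ·P_{ij}·D_{ij}/C_{ij})`. -/
noncomputable def wt {n : ℕ} (η : ℝ) (C D P : Fin n → Fin n → ℝ)
    (i j : Fin n) (σ : ℝ) : ℝ :=
  Real.exp (η * (σ * P i j) * D i j / C i j)

/-- For a rounded dual at a single entry, `P·D` is within `χ·D` of `a`, and `D ≥ 0`. -/
lemma rounded_entry {χ a D P : ℝ} (hχ0 : 0 < χ)
    (hDform : D = 0 ∨ ∃ h : ℕ, D = (1 + χ) ^ h)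
    (hlb : D ≤ |a|) (hub : |a| ≤ (1 + χ) * D)
    (hP : P = if 0 ≤ a then (1 : ℝ) else -1) :
    |P * D - a| ≤ χ * D ∧ 0 ≤ D := by
  have hD0 : 0 ≤ D := by
    rcases hDform with h | ⟨h, rfl⟩
    · simp [h]
    · positivity
  refine ⟨?_, hD0⟩
  by_cases ha : 0 ≤ a
  · rw [hP, if_pos ha, one_mul, abs_sub_le_iff]
    rw [abs_of_nonneg ha] at hlb hub
    constructor <;> nlinarith
  · rw [hP, if_neg ha, abs_sub_le_iff]
    rw [abs_of_neg (lt_of_not_ge ha)] at hlb hub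
    constructor <;> nlinarith

/-- evolution of the rounded-dual weights under one MWU update. -/
theorem weight_update_bound {n : ℕ} (hn : 1 ≤ n) (χ η K : ℝ)
    (hχ : χ ∈ Set.Ioo (0 : ℝ) 1) (hη : 0 < η) (hK : 0 < K) (r : ℕ)
    (C : Fin n → Fin n → ℝ) (hC : ∀ i j, 0 < C i j)
    (α β αt βt : Fin n → ℤ)
    (D P D' P' : Fin n → Fin n → ℝ)
    (hDP : IsRoundedDual χ α β D P)
    (hDP' : IsRoundedDual χ (α + αt) (β + βt) D' P')
    (hDbound : ∀ i j, D i j ≤ ((r : ℝ) + 1) * K * C i j)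
    (hD'bound : ∀ i j, D' i j ≤ ((r : ℝ) + 1) * K * C i j) :
    ∀ i j, ∀ σ : ℝ, (σ = 1 ∨ σ = -1) →
      wt η C D' P' i j σ ≤
        wt η C D P i j σ * Real.exp (2 * η * χ * ((r : ℝ) + 1) * K) *
          Real.exp (η * σ * ((αt i : ℝ) - (βt j : ℝ)) / C i j) := by
  intro i j σ hσ
  obtain ⟨hform, hsandwich, hsign⟩ := hDP
  obtain ⟨hform', hsandwich', hsign'⟩ := hDP'
  have hχ0 : 0 < χ := hχ.1
  have hc : (0 : ℝ) < C i j := hC i j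
  -- entrywise facts
  set a : ℝ := (α i : ℝ) - (β j : ℝ) with ha_def
  set a' : ℝ := ((α i : ℝ) + (αt i : ℝ)) - ((β j : ℝ) + (βt j : ℝ)) with ha'_def
  have hP1 : P i j = if 0 ≤ a then (1 : ℝ) else -1 := by
    rw [hsign i j]
    by_cases h : (0 : ℤ) ≤ α i - β j
    · rw [if_pos h, if_pos (show (0:ℝ) ≤ a by rw [ha_def]; exact_mod_cast h)]
    · rw [if_neg h, if_neg (show ¬ (0:ℝ) ≤ a by rw [ha_def]; intro hh; exact h (by exact_mod_cast hh))]
  have hP2 : P' i j = if 0 ≤ a' then (1 : ℝ) else -1 := by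
    rw [hsign' i j]
    have heq : ((0 : ℤ) ≤ (α + αt) i - (β + βt) j) ↔ (0:ℝ) ≤ a' := by
      rw [ha'_def]; simp only [Pi.add_apply]; constructor <;> intro h <;> [push_cast; skip]
      · exact_mod_cast h
      · exact_mod_cast h
    by_cases h : (0 : ℤ) ≤ (α + αt) i - (β + βt) j
    · rw [if_pos h, if_pos (heq.mp h)]
    · rw [if_neg h, if_neg (fun hh => h (heq.mpr hh))]
  have hs1 := hsandwich i j
  have hs2 := hsandwich' i j
  have hcast : |((α + αt) i : ℝ) - ((β + βt) j : ℝ)| = |a'| := by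
    simp only [ha'_def, Pi.add_apply]
    push_cast
    ring_nf
  rw [hcast] at hs2
  obtain ⟨h1, hD0⟩ := rounded_entry hχ0 (hform i j) hs1.1 hs1.2 hP1
  obtain ⟨h2, hD'0⟩ := rounded_entry hχ0 (hform' i j) hs2.1 hs2.2 hP2
  have hσabs : |σ| = 1 := by rcases hσ with rfl | rfl <;> norm_num
  -- key linear inequality
  have hlin : σ * P' i j * D' i j ≤ σ * P i j * D i j
      + 2 * χ * (((r : ℝ) + 1) * K * C i j) + σ * ((αt i : ℝ) - (βt j : ℝ)) := by
    have hdiff : σ * P' i j * D' i j - σ * P i j * D i j - σ * ((αt i : ℝ) - (βt j : ℝ))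
        = σ * ((P' i j * D' i j - a') - (P i j * D i j - a)) := by
      simp only [ha_def, ha'_def]; ring
    have hbound : σ * ((P' i j * D' i j - a') - (P i j * D i j - a))
        ≤ χ * D' i j + χ * D i j := by
      calc σ * ((P' i j * D' i j - a') - (P i j * D i j - a))
          ≤ |σ * ((P' i j * D' i j - a') - (P i j * D i j - a))| := le_abs_self _
        _ = |(P' i j * D' i j - a') - (P i j * D i j - a)| := by
            rw [abs_mul, hσabs, one_mul]
        _ ≤ |P' i j * D' i j - a'| + |P i j * D i j - a| := abs_sub _ _
        _ ≤ χ * D' i j + χ * D i j := add_le_add h2 h1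
    have hDb := hDbound i j
    have hD'b := hD'bound i j
    nlinarith [hbound, hdiff]
  -- conclude via exp monotonicity
  unfold wt
  rw [← Real.exp_add, ← Real.exp_add]
  apply Real.exp_le_exp.mpr
  rw [div_add' _ _ _ hc.ne', ← add_div, div_le_div_iff₀ hc hc]
  have hη' : 0 ≤ η := hη.le
  nlinarith [mul_le_mul_of_nonneg_left hlin hη', mul_pos hc hc, hc]
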